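/- Let E = EuclideanSpace ℝ (Fin n), ξ ∈ E with ‖ξ‖ = 1, and μ a Borel probability measure on E satisfying the standing integrability assumption whose topological support is not contained in any affine line {p + tξ : t ∈ ℝ} (p ∈ E). Then for β ∈ [0, ∞), the set of minimizers of G_{βξ} over E is nonempty if and only if β < 1. (Euclidean case of Theorem 6.1(a): existence of quantiles exactly for β < 1.) -/

import Mathlib

open MeasureTheory Filter Topology

/-- The data-based geometric quantile loss in Euclidean space:
`ρ_u(x,p) = ‖p − x‖ − ⟪u, p − x⟫`. -/
noncomputable def quantileLoss {n : ℕ} (u x p : EuclideanSpace ℝ (Fin n)) : ℝ :=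
  ‖p - x‖ - inner ℝ u (p - x)

/-- The topological support of a measure: points all of whose neighbourhoods have
positive measure. -/
def measSupport {α : Type*} [TopologicalSpace α] [MeasurableSpace α]
    (μ : Measure α) : Set α :=
  {x | ∀ U ∈ nhds x, μ U ≠ 0}

section Aux

variable {n : ℕ}

lemma ql_abs_le (u x p : EuclideanSpace ℝ (Fin n)) :
    |quantileLoss u x p| ≤ (1 + ‖u‖) * ‖p - x‖ := by
  have h := abs_real_inner_le_norm u (p - x)
  unfold quantileLoss
  have h2 : |‖p - x‖ - (inner ℝ u (p - x) : ℝ)| ≤ |‖p - x‖| + |(inner ℝ u (p - x) : ℝ)| :=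
    abs_sub _ _
  rw [abs_norm] at h2
  nlinarith

lemma ql_ge (u x p : EuclideanSpace ℝ (Fin n)) :
    (1 - ‖u‖) * ‖p - x‖ ≤ quantileLoss u x p := by
  have h := abs_real_inner_le_norm u (p - x)
  have h2 := le_abs_self ((inner ℝ u (p - x) : ℝ))
  unfold quantileLoss
  nlinarith

lemma ql_cont (u p : EuclideanSpace ℝ (Fin n)) :
    Continuous (fun x : EuclideanSpace ℝ (Fin n) => quantileLoss u x p) := by
  unfold quantileLoss
  exact ((continuous_const.sub continuous_id).norm).sub
    (Continuous.inner continuous_const (continuous_const.sub continuous_id))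

/-- Under the standing assumption, `‖x‖` is integrable. -/
lemma integrable_norm_of_assumption (μ : Measure (EuclideanSpace ℝ (Fin n)))
    [IsProbabilityMeasure μ]
    (hμint : ∃ (u₀ p₀ : EuclideanSpace ℝ (Fin n)), ‖u₀‖ < 1 ∧
      Integrable (fun x => quantileLoss u₀ x p₀) μ) :
    Integrable (fun x : EuclideanSpace ℝ (Fin n) => ‖x‖) μ := by
  obtain ⟨u₀, p₀, hu₀, hint⟩ := hμint
  have hc : (0:ℝ) < 1 - ‖u₀‖ := by linarith
  have h1 : Integrable (fun x => (1 - ‖u₀‖) * ‖p₀ - x‖) μ := by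
    refine hint.mono ?_ ?_
    · exact (continuous_const.mul ((continuous_const.sub continuous_id).norm)).aestronglyMeasurable
    · refine Filter.Eventually.of_forall fun x => ?_
      have h2 := ql_ge u₀ x p₀
      have h3 : (0:ℝ) ≤ (1 - ‖u₀‖) * ‖p₀ - x‖ := by positivity
      rw [Real.norm_eq_abs, Real.norm_eq_abs, abs_of_nonneg h3]
      exact le_trans h2 (le_abs_self _)
  have h2 : Integrable (fun x => ‖p₀ - x‖) μ := by
    have := h1.const_mul ((1 - ‖u₀‖)⁻¹)
    simpa [← mul_assoc, inv_mul_cancel₀ hc.ne'] using this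
  refine (h2.add (integrable_const ‖p₀‖)).mono' ?_ ?_
  · exact continuous_norm.aestronglyMeasurable
  · refine Filter.Eventually.of_forall fun x => ?_
    rw [Real.norm_eq_abs, abs_norm]
    have h3 : ‖x‖ ≤ ‖p₀ - x‖ + ‖p₀‖ := by
      have h4 := norm_sub_le p₀ (p₀ - x); simp at h4; linarith [h4, norm_sub_rev p₀ x ▸ h4]
    simp only [Pi.add_apply]
    linarith

lemma ql_integrable (μ : Measure (EuclideanSpace ℝ (Fin n))) [IsProbabilityMeasure μ]
    (hnorm : Integrable (fun x : EuclideanSpace ℝ (Fin n) => ‖x‖) μ)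
    (u p : EuclideanSpace ℝ (Fin n)) :
    Integrable (fun x => quantileLoss u x p) μ := by
  refine Integrable.mono' (((integrable_const ‖p‖).add hnorm).const_mul (1 + ‖u‖))
    (ql_cont u p).aestronglyMeasurable ?_
  refine Filter.Eventually.of_forall fun x => ?_
  rw [Real.norm_eq_abs]
  refine le_trans (ql_abs_le u x p) ?_
  have h1 : ‖p - x‖ ≤ ‖p‖ + ‖x‖ := norm_sub_le p x
  have h2 : (0:ℝ) ≤ 1 + ‖u‖ := by positivity
  simp only [Pi.add_apply]
  nlinarith


lemma integrable_norm_sub (μ : Measure (EuclideanSpace ℝ (Fin n))) [IsProbabilityMeasure μ]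
    (hnorm : Integrable (fun x : EuclideanSpace ℝ (Fin n) => ‖x‖) μ)
    (q : EuclideanSpace ℝ (Fin n)) :
    Integrable (fun x => ‖q - x‖) μ := by
  refine Integrable.mono' ((integrable_const ‖q‖).add hnorm)
    ((continuous_const.sub continuous_id).norm).aestronglyMeasurable ?_
  refine Filter.Eventually.of_forall fun x => ?_
  simp only [Pi.add_apply, Real.norm_eq_abs, abs_norm]
  exact norm_sub_le q x

lemma G_cont (μ : Measure (EuclideanSpace ℝ (Fin n))) [IsProbabilityMeasure μ]
    (hnorm : Integrable (fun x : EuclideanSpace ℝ (Fin n) => ‖x‖) μ)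
    (u : EuclideanSpace ℝ (Fin n)) :
    Continuous (fun p => ∫ x, quantileLoss u x p ∂μ) := by
  have key : ∀ p q : EuclideanSpace ℝ (Fin n),
      (∫ x, quantileLoss u x p ∂μ) - (∫ x, quantileLoss u x q ∂μ) ≤ (1 + ‖u‖) * ‖p - q‖ := by
    intro p q
    rw [← integral_sub (ql_integrable μ hnorm u p) (ql_integrable μ hnorm u q)]
    have hpt : ∀ x, quantileLoss u x p - quantileLoss u x q ≤ (1 + ‖u‖) * ‖p - q‖ := by
      intro x
      unfold quantileLoss
      have h1 : ‖p - x‖ - ‖q - x‖ ≤ ‖p - q‖ := by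
        have := norm_sub_norm_le (p - x) (q - x)
        have h2 : p - x - (q - x) = p - q := by abel
        rw [h2] at this; linarith
      have h3 : (inner ℝ u (p - x) : ℝ) - inner ℝ u (q - x) = inner ℝ u (p - q) := by
        rw [← inner_sub_right]; congr 1; abel
      have h4 : |(inner ℝ u (p - q) : ℝ)| ≤ ‖u‖ * ‖p - q‖ := abs_real_inner_le_norm u (p - q)
      have h5 : -(‖u‖ * ‖p - q‖) ≤ (inner ℝ u (p - q) : ℝ) := by
        have := neg_abs_le ((inner ℝ u (p - q) : ℝ)); linarith
      nlinarith [norm_nonneg (p - q)]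
    calc (∫ x, (quantileLoss u x p - quantileLoss u x q) ∂μ)
        ≤ ∫ _x, (1 + ‖u‖) * ‖p - q‖ ∂μ := by
          refine integral_mono ((ql_integrable μ hnorm u p).sub (ql_integrable μ hnorm u q))
            (integrable_const _) hpt
      _ = (1 + ‖u‖) * ‖p - q‖ := by simp
  rw [Metric.continuous_iff]
  intro p ε hε
  have hK : (0:ℝ) < 1 + ‖u‖ := by positivity
  refine ⟨ε / (1 + ‖u‖), by positivity, fun q hq => ?_⟩
  rw [Real.dist_eq]
  have h1 := key q p
  have h2 := key p q
  rw [dist_eq_norm] at hq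
  have h3 : ‖p - q‖ = ‖q - p‖ := norm_sub_rev p q
  have h4 : (1 + ‖u‖) * ‖q - p‖ < ε := by
    rw [← lt_div_iff₀' hK]; linarith [hq]
  rw [abs_sub_lt_iff]
  constructor <;> [skip; skip] <;> nlinarith [h1, h2]

lemma exists_min (μ : Measure (EuclideanSpace ℝ (Fin n))) [IsProbabilityMeasure μ]
    (hnorm : Integrable (fun x : EuclideanSpace ℝ (Fin n) => ‖x‖) μ)
    (u : EuclideanSpace ℝ (Fin n)) (hu : ‖u‖ < 1) :
    ∃ q : EuclideanSpace ℝ (Fin n), ∀ p, ∫ x, quantileLoss u x q ∂μ ≤ ∫ x, quantileLoss u x p ∂μ := by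
  set G : EuclideanSpace ℝ (Fin n) → ℝ := fun p => ∫ x, quantileLoss u x p ∂μ with hG
  set c : ℝ := ∫ x, ‖x‖ ∂μ with hc
  have hcoercive : ∀ p, (1 - ‖u‖) * (‖p‖ - c) ≤ G p := by
    intro p
    have h1 : ∀ x, (1 - ‖u‖) * (‖p‖ - ‖x‖) ≤ quantileLoss u x p := by
      intro x
      refine le_trans ?_ (ql_ge u x p)
      have h2 : ‖p‖ - ‖x‖ ≤ ‖p - x‖ := norm_sub_norm_le p x
      nlinarith [norm_nonneg (p - x)]
    have h3 : (∫ x, (1 - ‖u‖) * (‖p‖ - ‖x‖) ∂μ) ≤ G p :=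
      integral_mono (((integrable_const ‖p‖).sub hnorm).const_mul _) (ql_integrable μ hnorm u p) h1
    have h4 : (∫ x, (1 - ‖u‖) * (‖p‖ - ‖x‖) ∂μ) = (1 - ‖u‖) * (‖p‖ - c) := by
      rw [integral_const_mul, integral_sub (integrable_const _) hnorm]
      simp [hc]
    linarith [h4 ▸ h3]
  have hu1 : (0:ℝ) < 1 - ‖u‖ := by linarith
  set R : ℝ := (G 0 + (1 - ‖u‖) * c) / (1 - ‖u‖) + 1 with hR
  have hR0 : 0 ≤ R := by
    have h0 := hcoercive 0
    simp only [norm_zero] at h0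
    have h1 : 0 ≤ G 0 + (1 - ‖u‖) * c := by nlinarith
    have h2 : 0 ≤ (G 0 + (1 - ‖u‖) * c) / (1 - ‖u‖) := div_nonneg h1 hu1.le
    rw [hR]; linarith
  have hball : (0 : EuclideanSpace ℝ (Fin n)) ∈ Metric.closedBall (0 : EuclideanSpace ℝ (Fin n)) R := by
    simp [hR0]
  obtain ⟨q, hqmem, hqmin⟩ := (isCompact_closedBall (0 : EuclideanSpace ℝ (Fin n)) R).exists_isMinOn
    ⟨0, hball⟩ ((G_cont μ hnorm u).continuousOn)
  refine ⟨q, fun p => ?_⟩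
  by_cases hp : p ∈ Metric.closedBall (0 : EuclideanSpace ℝ (Fin n)) R
  · exact hqmin hp
  · have hq0 : G q ≤ G 0 := hqmin hball
    have hpR : R < ‖p‖ := by
      simp only [Metric.mem_closedBall, dist_zero_right, not_le] at hp
      exact hp
    have h2 : G 0 + (1 - ‖u‖) < G p := by
      have h3 := hcoercive p
      rw [hR] at hpR
      have h4 : (G 0 + (1 - ‖u‖) * c) / (1 - ‖u‖) < ‖p‖ - 1 := by linarith
      rw [div_lt_iff₀ hu1] at h4
      nlinarith
    linarith [hq0, h2]


lemma ptwise_limit (ξ : EuclideanSpace ℝ (Fin n)) (hξ : ‖ξ‖ = 1)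
    (v : EuclideanSpace ℝ (Fin n)) :
    Filter.Tendsto (fun k : ℕ => ‖v + (k:ℝ) • ξ‖ - inner ℝ ξ v - k) atTop (𝓝 0) := by
  have hcs : ∀ k : ℕ, (inner ℝ ξ v : ℝ) + k ≤ ‖v + (k:ℝ) • ξ‖ := by
    intro k
    have h1 : (inner ℝ ξ (v + (k:ℝ) • ξ) : ℝ) = inner ℝ ξ v + k := by
      rw [inner_add_right, real_inner_smul_right, real_inner_self_eq_norm_sq, hξ]; ring
    have h2 := real_inner_le_norm ξ (v + (k:ℝ) • ξ)
    rw [h1, hξ, one_mul] at h2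
    exact h2
  have hsq : ∀ k : ℕ, ‖v + (k:ℝ) • ξ‖ ^ 2 = ((inner ℝ ξ v : ℝ) + k) ^ 2 + (‖v‖^2 - (inner ℝ ξ v : ℝ)^2) := by
    intro k
    rw [norm_add_sq_real, norm_smul, real_inner_smul_right, real_inner_comm]
    simp only [hξ, Real.norm_eq_abs, abs_of_nonneg (by positivity : (0:ℝ) ≤ (k:ℝ)), mul_one, one_pow]
    ring
  refine squeeze_zero' (g := fun k : ℕ => ‖v‖^2 / ((k:ℝ) - ‖v‖)) ?_ ?_ ?_
  · exact Filter.Eventually.of_forall fun k => by linarith [hcs k]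
  · -- upper bound ‖v‖^2 / (k - ‖v‖) for k ≥ ‖v‖ + 1
    filter_upwards [Filter.eventually_ge_atTop (⌈‖v‖⌉₊ + 1)] with k hk
    have hk' : ‖v‖ + 1 ≤ (k:ℝ) := by
      have := Nat.ceil_le_floor_add_one ‖v‖
      have h1 : ‖v‖ ≤ (⌈‖v‖⌉₊ : ℝ) := Nat.le_ceil ‖v‖
      have h2 : ((⌈‖v‖⌉₊ + 1 : ℕ) : ℝ) ≤ k := Nat.cast_le.mpr hk
      push_cast at h2
      linarith
    set w := v + (k:ℝ) • ξ with hw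
    set a : ℝ := (inner ℝ ξ v : ℝ) + k with ha
    have h3 : (‖w‖ - a) * (‖w‖ + a) = ‖v‖^2 - (inner ℝ ξ v : ℝ)^2 := by
      have h3' := hsq k
      rw [← hw, ← ha] at h3'
      linear_combination h3'
    have h4 : 0 < (k:ℝ) - ‖v‖ := by linarith
    have h5 : (k:ℝ) - ‖v‖ ≤ ‖w‖ + a := by
      have h6 : -‖v‖ ≤ (inner ℝ ξ v : ℝ) := by
        have := abs_real_inner_le_norm ξ v
        rw [hξ, one_mul] at this
        cases abs_le.mp this; linarith
      have := hcs k
      rw [← ha, ← hw] at this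
      linarith
    have h7 : ‖w‖ - a ≤ ‖v‖^2 / ((k:ℝ) - ‖v‖) := by
      rw [le_div_iff₀ h4]
      have h8 : 0 ≤ ‖w‖ - a := by have := hcs k; rw [← ha, ← hw] at this; linarith
      have h9 : (‖w‖ - a) * ((k:ℝ) - ‖v‖) ≤ (‖w‖ - a) * (‖w‖ + a) :=
        mul_le_mul_of_nonneg_left h5 h8
      have h10 : (inner ℝ ξ v : ℝ)^2 ≥ 0 := sq_nonneg _
      linarith [h3 ▸ h9]
    have : ‖v + (k:ℝ) • ξ‖ - (inner ℝ ξ v : ℝ) - k = ‖w‖ - a := by rw [hw, ha]; ring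
    linarith [h7]
  · have h1 : Filter.Tendsto (fun k : ℕ => (k:ℝ) - ‖v‖) atTop atTop :=
      tendsto_atTop_add_const_right atTop (-‖v‖) tendsto_natCast_atTop_atTop
    exact Tendsto.div_atTop tendsto_const_nhds h1

lemma ql_shift_eq (ξ : EuclideanSpace ℝ (Fin n)) (hξ : ‖ξ‖ = 1)
    (q x : EuclideanSpace ℝ (Fin n)) (t : ℝ) :
    quantileLoss ξ x (q + t • ξ) = ‖(q - x) + t • ξ‖ - inner ℝ ξ (q - x) - t := by
  unfold quantileLoss
  have h1 : q + t • ξ - x = (q - x) + t • ξ := by abel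
  rw [h1, inner_add_right, real_inner_smul_right, real_inner_self_eq_norm_sq, hξ]
  ring

lemma ql_nonneg_unit (ξ : EuclideanSpace ℝ (Fin n)) (hξ : ‖ξ‖ = 1)
    (x p : EuclideanSpace ℝ (Fin n)) : 0 ≤ quantileLoss ξ x p := by
  have := ql_ge ξ x p
  rw [hξ] at this
  simpa using this

lemma tendsto_G_shift (μ : Measure (EuclideanSpace ℝ (Fin n))) [IsProbabilityMeasure μ]
    (hnorm : Integrable (fun x : EuclideanSpace ℝ (Fin n) => ‖x‖) μ)
    (ξ : EuclideanSpace ℝ (Fin n)) (hξ : ‖ξ‖ = 1) (q : EuclideanSpace ℝ (Fin n)) :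
    Filter.Tendsto (fun k : ℕ => ∫ x, quantileLoss ξ x (q + (k:ℝ) • ξ) ∂μ) atTop (𝓝 0) := by
  have h0 : (0:ℝ) = ∫ _x, (0:ℝ) ∂μ := by simp
  rw [h0]
  refine tendsto_integral_of_dominated_convergence (fun x => 2 * ‖q - x‖)
    (fun k => (ql_cont ξ (q + (k:ℝ) • ξ)).aestronglyMeasurable)
    ((integrable_norm_sub μ hnorm q).const_mul 2) ?_ ?_
  · intro k
    refine Filter.Eventually.of_forall fun x => ?_
    rw [Real.norm_eq_abs, abs_of_nonneg (ql_nonneg_unit ξ hξ x _)]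
    rw [ql_shift_eq ξ hξ q x (k:ℝ)]
    have h1 : ‖(q - x) + (k:ℝ) • ξ‖ ≤ ‖q - x‖ + k := by
      have := norm_add_le (q - x) ((k:ℝ) • ξ)
      rw [norm_smul, hξ] at this
      simpa [abs_of_nonneg (by positivity : (0:ℝ) ≤ (k:ℝ))] using this
    have h2 : -‖q - x‖ ≤ (inner ℝ ξ (q - x) : ℝ) := by
      have := abs_real_inner_le_norm ξ (q - x)
      rw [hξ, one_mul] at this
      cases abs_le.mp this; linarith
    linarith
  · refine Filter.Eventually.of_forall fun x => ?_
    have := ptwise_limit ξ hξ (q - x)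
    refine this.congr fun k => ?_
    rw [ql_shift_eq ξ hξ q x (k:ℝ)]

lemma support_subset_line (μ : Measure (EuclideanSpace ℝ (Fin n))) [IsProbabilityMeasure μ]
    (ξ : EuclideanSpace ℝ (Fin n)) (hξ : ‖ξ‖ = 1) (q : EuclideanSpace ℝ (Fin n))
    (hzero : ∀ᵐ x ∂μ, quantileLoss ξ x q = 0) :
    measSupport μ ⊆ {y | ∃ t : ℝ, y = q + t • ξ} := by
  set L : Set (EuclideanSpace ℝ (Fin n)) := {y | ∃ t : ℝ, y = q + t • ξ} with hL
  have hsub : ∀ x, quantileLoss ξ x q = 0 → x ∈ L := by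
    intro x hx
    unfold quantileLoss at hx
    set v := q - x with hv
    have hc : (inner ℝ ξ v : ℝ) = ‖v‖ := by linarith [sub_eq_zero.mp hx]
    have hs : (inner ℝ v ξ : ℝ) = ‖v‖ := by rw [real_inner_comm]; exact hc
    have hzero2 : ‖v - ‖v‖ • ξ‖^2 = 0 := by
      rw [norm_sub_sq_real, norm_smul, real_inner_smul_right, hξ, hs]
      simp only [Real.norm_eq_abs, abs_norm, mul_one, one_mul]
      ring
    have hv2' : v = ‖v‖ • ξ := by
      have h9 : ‖v - ‖v‖ • ξ‖ = 0 := by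
        nlinarith [norm_nonneg (v - ‖v‖ • ξ), hzero2]
      have h10 := norm_eq_zero.mp h9
      exact sub_eq_zero.mp h10
    refine ⟨-‖v‖, ?_⟩
    have hx2 : x = q - v := by rw [hv]; abel
    rw [hx2, neg_smul, ← hv2']
    abel
  have hnull : μ Lᶜ = 0 := by
    have h1 : μ {x | ¬ quantileLoss ξ x q = 0} = 0 := hzero
    refine measure_mono_null ?_ h1
    intro x hx
    simp only [Set.mem_setOf_eq]
    intro h
    exact hx (hsub x h)
  have hclosed : IsClosed L := by
    have h1 : L = (fun y => y - q) ⁻¹' ((Submodule.span ℝ {ξ} : Submodule ℝ (EuclideanSpace ℝ (Fin n))) : Set (EuclideanSpace ℝ (Fin n))) := by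
      ext y
      simp only [Set.mem_preimage, SetLike.mem_coe, Submodule.mem_span_singleton, hL, Set.mem_setOf_eq]
      constructor
      · rintro ⟨t, rfl⟩; exact ⟨t, by abel⟩
      · rintro ⟨t, ht⟩; refine ⟨t, ?_⟩; rw [ht]; abel
    rw [h1]
    exact IsClosed.preimage (continuous_id.sub continuous_const)
      (Submodule.span ℝ {ξ}).closed_of_finiteDimensional
  intro y hy
  by_contra hyL
  exact hy Lᶜ (hclosed.isOpen_compl.mem_nhds hyL) hnull

end Aux

/-- Euclidean case of Theorem 6.1(a): if the support of `μ` is not contained in any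
affine line in direction `ξ`, then the set of minimizers of `G_{βξ}` is nonempty iff
`β < 1`. -/
theorem quantile_exists_iff_beta_lt_one
    {n : ℕ} (μ : Measure (EuclideanSpace ℝ (Fin n))) [IsProbabilityMeasure μ]
    (hμint : ∃ (u₀ p₀ : EuclideanSpace ℝ (Fin n)), ‖u₀‖ < 1 ∧
      Integrable (fun x => quantileLoss u₀ x p₀) μ)
    (ξ : EuclideanSpace ℝ (Fin n)) (hξ : ‖ξ‖ = 1)
    (hsupp : ¬ ∃ p : EuclideanSpace ℝ (Fin n),
      measSupport μ ⊆ {y | ∃ t : ℝ, y = p + t • ξ})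
    (β : ℝ) (hβ : 0 ≤ β) :
    ({q : EuclideanSpace ℝ (Fin n) | ∀ p, ∫ x, quantileLoss (β • ξ) x q ∂μ
        ≤ ∫ x, quantileLoss (β • ξ) x p ∂μ}).Nonempty ↔ β < 1 := by
  have hnorm := integrable_norm_of_assumption μ hμint
  constructor
  · rintro ⟨q, hq⟩
    simp only [Set.mem_setOf_eq] at hq
    by_contra hβ1
    push_neg at hβ1
    rcases eq_or_lt_of_le hβ1 with heq | hlt
    · -- β = 1
      subst heq
      simp only [one_smul] at hq
      have hGq_nonneg : 0 ≤ ∫ x, quantileLoss ξ x q ∂μ :=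
        integral_nonneg (fun x => ql_nonneg_unit ξ hξ x q)
      have hle : ∀ k : ℕ, (∫ x, quantileLoss ξ x q ∂μ)
          ≤ ∫ x, quantileLoss ξ x (q + (k:ℝ) • ξ) ∂μ := fun k => hq _
      have hlim := tendsto_G_shift μ hnorm ξ hξ q
      have hGq_le : (∫ x, quantileLoss ξ x q ∂μ) ≤ 0 :=
        ge_of_tendsto hlim (Filter.Eventually.of_forall hle)
      have hGq0 : (∫ x, quantileLoss ξ x q ∂μ) = 0 := le_antisymm hGq_le hGq_nonneg
      have hae : ∀ᵐ x ∂μ, quantileLoss ξ x q = 0 := by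
        have h0 := (integral_eq_zero_iff_of_nonneg
          (fun x => ql_nonneg_unit ξ hξ x q) (ql_integrable μ hnorm ξ q)).mp hGq0
        filter_upwards [h0] with x hx
        simpa using hx
      exact hsupp ⟨q, support_subset_line μ ξ hξ q hae⟩
    · -- 1 < β
      have key := hq (q + ξ)
      have hpt : ∀ x, quantileLoss (β • ξ) x (q + ξ) ≤ quantileLoss (β • ξ) x q + (1 - β) := by
        intro x
        unfold quantileLoss
        have h1 : q + ξ - x = (q - x) + ξ := by abel
        rw [h1, inner_add_right]
        have h2 : ‖(q - x) + ξ‖ ≤ ‖q - x‖ + 1 := by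
          have := norm_add_le (q - x) ξ; rw [hξ] at this; exact this
        have h3 : (inner ℝ (β • ξ) ξ : ℝ) = β := by
          rw [real_inner_smul_left, real_inner_self_eq_norm_sq, hξ]; ring
        rw [h3]
        linarith
      have hint1 := ql_integrable μ hnorm (β • ξ) (q + ξ)
      have hint2 := ql_integrable μ hnorm (β • ξ) q
      have h4 : (∫ x, quantileLoss (β • ξ) x (q + ξ) ∂μ)
          ≤ ∫ x, (quantileLoss (β • ξ) x q + (1 - β)) ∂μ :=
        integral_mono hint1 (hint2.add (integrable_const _)) hpt
      rw [integral_add hint2 (integrable_const _), integral_const] at h4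
      simp only [probReal_univ, measure_univ, ENNReal.toReal_one, smul_eq_mul, one_mul] at h4
      linarith
  · intro hβ1
    have h : ‖β • ξ‖ < 1 := by
      rw [norm_smul, hξ, mul_one, Real.norm_eq_abs, abs_of_nonneg hβ]
      exact hβ1
    obtain ⟨q, hq⟩ := exists_min μ hnorm (β • ξ) h
    exact ⟨q, hq⟩
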